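/- Let n be a nonempty finite type and let U ∈ Matrix.unitaryGroup (n × n) ℂ be a unitary matrix. Suppose Φ is a nonzero element of the ℂ-linear span (inside the space of linear maps Matrix n n ℂ →ₗ[ℂ] Matrix n n ℂ) of the set of CPTP maps, and suppose T_U[Φ] = λ • Φ for some λ ∈ ℂ, where T_U is the transfer operator of U (with A = B = n). Then |λ| ≤ 1. -/

import Mathlib

open scoped Matrix ComplexOrder

/-- Partial trace over the second factor `B`. -/
noncomputable def ptraceB (A B : Type*) [Fintype A] [Fintype B] :
    Matrix (A × B) (A × B) ℂ →ₗ[ℂ] Matrix A A ℂ where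
  toFun M := Matrix.of fun a a' => ∑ b : B, M (a, b) (a', b)
  map_add' M N := by
    ext a a'
    simp [Finset.sum_add_distrib]
  map_smul' c M := by
    ext a a'
    simp [Finset.mul_sum]

/-- The ancilla-attaching map `ρ ↦ ρ ⊗ |b0⟩⟨b0|`. -/
noncomputable def ancilla (A B : Type*) [Fintype A] [Fintype B] [DecidableEq B] (b0 : B) :
    Matrix A A ℂ →ₗ[ℂ] Matrix (A × B) (A × B) ℂ where
  toFun ρ := Matrix.of fun p p' => if p.2 = b0 ∧ p'.2 = b0 then ρ p.1 p'.1 else 0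
  map_add' ρ σ := by
    ext p p'
    by_cases h : p.2 = b0 ∧ p'.2 = b0 <;> simp [h]
  map_smul' c ρ := by
    ext p p'
    by_cases h : p.2 = b0 ∧ p'.2 = b0 <;> simp [h]

/-- The amplification `I_A ⊗ Φ` of a linear map `Φ` on `B`-indexed matrices. -/
noncomputable def amp (A : Type*) {B : Type*} [Fintype A] [Fintype B]
    (Φ : Matrix B B ℂ →ₗ[ℂ] Matrix B B ℂ) :
    Matrix (A × B) (A × B) ℂ →ₗ[ℂ] Matrix (A × B) (A × B) ℂ where
  toFun M := Matrix.of fun p p' => Φ (Matrix.of fun c c' => M (p.1, c) (p'.1, c')) p.2 p'.2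
  map_add' M N := by
    ext p p'
    simp only [Matrix.of_apply, Matrix.add_apply]
    have h : (Matrix.of fun c c' => M (p.1, c) (p'.1, c') + N (p.1, c) (p'.1, c'))
        = (Matrix.of fun c c' => M (p.1, c) (p'.1, c'))
          + (Matrix.of fun c c' => N (p.1, c) (p'.1, c')) := by
      ext c c'; simp
    rw [h, map_add, Matrix.add_apply]
  map_smul' r M := by
    ext p p'
    simp only [Matrix.of_apply, Matrix.smul_apply, smul_eq_mul, RingHom.id_apply]
    have h : (Matrix.of fun c c' => r * M (p.1, c) (p'.1, c'))
        = r • (Matrix.of fun c c' => M (p.1, c) (p'.1, c')) := by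
      ext c c'; simp
    rw [h, map_smul, Matrix.smul_apply, smul_eq_mul]

/-- The linear map `M ↦ P * M * Q`. -/
noncomputable def sandwich {n : Type*} [Fintype n] (P Q : Matrix n n ℂ) :
    Matrix n n ℂ →ₗ[ℂ] Matrix n n ℂ where
  toFun M := P * M * Q
  map_add' M N := by simp [Matrix.mul_add, Matrix.add_mul]
  map_smul' c M := by simp [Matrix.mul_smul, Matrix.smul_mul]

/-- The transfer operator `T_U[Φ](ρ) = Tr_B(Uᴴ * ((I_A ⊗ Φ)(U * E(ρ) * Uᴴ)) * U)`. -/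
noncomputable def transferOp {A B : Type*} [Fintype A] [Fintype B] [DecidableEq B]
    (b0 : B) (U : Matrix (A × B) (A × B) ℂ)
    (Φ : Matrix B B ℂ →ₗ[ℂ] Matrix B B ℂ) : Matrix A A ℂ →ₗ[ℂ] Matrix A A ℂ :=
  (ptraceB A B) ∘ₗ (sandwich Uᴴ U) ∘ₗ (amp A Φ) ∘ₗ (sandwich U Uᴴ) ∘ₗ (ancilla A B b0)

/-- A linear map on matrices is trace-preserving if it preserves the trace. -/
def IsTracePreserving {n : Type*} [Fintype n]
    (Φ : Matrix n n ℂ →ₗ[ℂ] Matrix n n ℂ) : Prop :=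
  ∀ X : Matrix n n ℂ, (Φ X).trace = X.trace

/-- A linear map on matrices is completely positive if all of its amplifications
map positive semidefinite matrices to positive semidefinite matrices. -/
def IsCompletelyPositive {n : Type*} [Fintype n]
    (Φ : Matrix n n ℂ →ₗ[ℂ] Matrix n n ℂ) : Prop :=
  ∀ (m : Type) (_ : Fintype m), ∀ M : Matrix (m × n) (m × n) ℂ,
    M.PosSemidef → (amp m Φ M).PosSemidef

/-- A CPTP map (quantum channel). -/
def IsCPTP {n : Type*} [Fintype n] (Φ : Matrix n n ℂ →ₗ[ℂ] Matrix n n ℂ) : Prop :=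
  IsTracePreserving Φ ∧ IsCompletelyPositive Φ


/-! ### Auxiliary machinery -/

open Matrix in
/-- Generalized amplification of a (not necessarily endo-) linear map on matrices. -/
noncomputable def gamp (m : Type*) [Fintype m] {a b : Type*} [Fintype a] [Fintype b]
    (f : Matrix a a ℂ →ₗ[ℂ] Matrix b b ℂ) (M : Matrix (m × a) (m × a) ℂ) :
    Matrix (m × b) (m × b) ℂ :=
  Matrix.of fun p p' => f (Matrix.of fun c c' => M (p.1, c) (p'.1, c')) p.2 p'.2

lemma gamp_comp {m a b c : Type*} [Fintype m] [Fintype a] [Fintype b] [Fintype c]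
    (f : Matrix a a ℂ →ₗ[ℂ] Matrix b b ℂ) (g : Matrix b b ℂ →ₗ[ℂ] Matrix c c ℂ)
    (M : Matrix (m × a) (m × a) ℂ) :
    gamp m (g ∘ₗ f) M = gamp m g (gamp m f M) := rfl

lemma psd_sum {k ι : Type*} [Fintype k] (s : Finset ι) (f : ι → Matrix k k ℂ)
    (h : ∀ i ∈ s, (f i).PosSemidef) : (∑ i ∈ s, f i).PosSemidef :=
  Finset.sum_induction f _ (fun _ _ ha hb => ha.add hb) Matrix.PosSemidef.zero h

lemma psd_gamp_ancilla {A B : Type*} [Fintype A] [Fintype B] [DecidableEq B] (b0 : B)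
    (m : Type*) [Fintype m] {M : Matrix (m × A) (m × A) ℂ} (hM : M.PosSemidef) :
    (gamp m (ancilla A B b0) M).PosSemidef := by
  classical
  let V : Matrix (m × (A × B)) (m × A) ℂ :=
    Matrix.of fun p y => (if p.2.2 = b0 then 1 else 0) * (if y = (p.1, p.2.1) then 1 else 0)
  have key : gamp m (ancilla A B b0) M = V * M * Vᴴ := by
    ext p p'
    show (if p.2.2 = b0 ∧ p'.2.2 = b0 then M (p.1, p.2.1) (p'.1, p'.2.1) else 0)
      = (V * M * Vᴴ) p p'
    simp only [V, Matrix.mul_apply, Matrix.of_apply, Matrix.conjTranspose_apply, star_mul',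
      apply_ite (star : ℂ → ℂ), star_zero, star_one, ite_mul, mul_ite, one_mul, zero_mul,
      mul_zero, mul_one, Finset.sum_ite_irrel, Finset.sum_const_zero, Finset.sum_ite_eq,
      Finset.sum_ite_eq', Finset.mem_univ, if_true]
    by_cases h1 : p.2.2 = b0 <;> by_cases h2 : p'.2.2 = b0 <;> simp [h1, h2]
  rw [key]
  exact hM.mul_mul_conjTranspose_same V

lemma psd_gamp_sandwich {B : Type*} [Fintype B] (Q : Matrix B B ℂ)
    (m : Type*) [Fintype m] {M : Matrix (m × B) (m × B) ℂ} (hM : M.PosSemidef) :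
    (gamp m (sandwich Q Qᴴ) M).PosSemidef := by
  classical
  let W : Matrix (m × B) (m × B) ℂ :=
    Matrix.of fun p y => (if y.1 = p.1 then 1 else 0) * Q p.2 y.2
  have key : gamp m (sandwich Q Qᴴ) M = W * M * Wᴴ := by
    ext p p'
    show (Q * (Matrix.of fun c c' => M (p.1, c) (p'.1, c')) * Qᴴ) p.2 p'.2
      = (W * M * Wᴴ) p p'
    simp only [W, Matrix.mul_apply, Matrix.of_apply, Matrix.conjTranspose_apply,
      Fintype.sum_prod_type, ite_mul, mul_ite, one_mul, zero_mul, mul_zero, mul_one, star_mul',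
      apply_ite (star : ℂ → ℂ), star_zero, star_one, Finset.sum_ite_irrel,
      Finset.sum_const_zero, Finset.sum_ite_eq, Finset.sum_ite_eq', Finset.mem_univ, if_true,
      Finset.sum_mul, Finset.mul_sum]
  rw [key]
  exact hM.mul_mul_conjTranspose_same W

lemma psd_gamp_ptraceB {A B : Type*} [Fintype A] [Fintype B]
    (m : Type*) [Fintype m] {M : Matrix (m × (A × B)) (m × (A × B)) ℂ} (hM : M.PosSemidef) :
    (gamp m (ptraceB A B) M).PosSemidef := by
  classical
  let W : B → Matrix (m × A) (m × (A × B)) ℂ := fun b =>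
    Matrix.of fun p y => if y = (p.1, (p.2, b)) then 1 else 0
  have key : gamp m (ptraceB A B) M = ∑ b : B, W b * M * (W b)ᴴ := by
    ext p p'
    show (∑ b : B, M (p.1, (p.2, b)) (p'.1, (p'.2, b))) = (∑ b : B, W b * M * (W b)ᴴ) p p'
    rw [Matrix.sum_apply]
    refine Finset.sum_congr rfl fun b _ => ?_
    simp only [W, Matrix.mul_apply, Matrix.of_apply, Matrix.conjTranspose_apply,
      apply_ite (star : ℂ → ℂ), star_zero, star_one, ite_mul, mul_ite, one_mul, zero_mul,
      mul_zero, mul_one, Finset.sum_ite_irrel, Finset.sum_const_zero, Finset.sum_ite_eq,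
      Finset.sum_ite_eq', Finset.mem_univ, if_true]
  rw [key]
  exact psd_sum _ _ fun b _ => hM.mul_mul_conjTranspose_same (W b)

lemma psd_gamp_amp {n : Type} [Fintype n] {Ψ : Matrix n n ℂ →ₗ[ℂ] Matrix n n ℂ}
    (hΨ : IsCompletelyPositive Ψ)
    (m : Type) [Fintype m] {M : Matrix (m × (n × n)) (m × (n × n)) ℂ} (hM : M.PosSemidef) :
    (gamp m (amp n Ψ) M).PosSemidef := by
  let σ : (m × n) × n → m × (n × n) := fun x => (x.1.1, (x.1.2, x.2))
  let τ : m × (n × n) → (m × n) × n := fun x => ((x.1, x.2.1), x.2.2)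
  have h1 : (M.submatrix σ σ).PosSemidef := hM.submatrix σ
  have h2 := hΨ (m × n) inferInstance _ h1
  have key : gamp m (amp n Ψ) M = (amp (m × n) Ψ (M.submatrix σ σ)).submatrix τ τ := rfl
  rw [key]
  exact h2.submatrix τ

/-- `Ψ` applied to a PSD matrix is PSD if `Ψ` is completely positive. -/
lemma IsCompletelyPositive.psd_map {n : Type} [Fintype n]
    {Ψ : Matrix n n ℂ →ₗ[ℂ] Matrix n n ℂ} (hΨ : IsCompletelyPositive Ψ)
    {P : Matrix n n ℂ} (hP : P.PosSemidef) : (Ψ P).PosSemidef := by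
  let ε : Unit × n → n := fun x => x.2
  let δ : n → Unit × n := fun x => ((), x)
  have h1 : (P.submatrix ε ε).PosSemidef := hP.submatrix ε
  have h2 := hΨ Unit inferInstance _ h1
  have key : Ψ P = (amp Unit Ψ (P.submatrix ε ε)).submatrix δ δ := rfl
  rw [key]
  exact h2.submatrix δ

/-- The entries of a PSD matrix are bounded by the (real part of the) trace. -/
lemma psd_entry_bound {k : Type*} [Fintype k] [DecidableEq k] {M : Matrix k k ℂ}
    (hM : M.PosSemidef) (i j : k) : ‖M i j‖ ≤ M.trace.re := by
  have hdiag : ∀ a, 0 ≤ (M a a).re ∧ (M a a).im = 0 := by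
    intro a
    have h := hM.dotProduct_mulVec_nonneg (Pi.single a 1)
    have heq : star (Pi.single a (1:ℂ)) ⬝ᵥ M *ᵥ Pi.single a 1 = M a a := by
      simp [dotProduct, Matrix.mulVec, Pi.single_apply, apply_ite (star : ℂ → ℂ)]
    rw [heq] at h
    exact ⟨by simpa using (Complex.le_def.1 h).1, by simpa using ((Complex.le_def.1 h).2).symm⟩
  have htr : M.trace.re = ∑ a, (M a a).re := by
    simp [Matrix.trace, Matrix.diag, Complex.re_sum]
  have hle : ∀ a, (M a a).re ≤ M.trace.re := by
    intro a
    rw [htr]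
    exact Finset.single_le_sum (fun b _ => (hdiag b).1) (Finset.mem_univ a)
  by_cases hij : i = j
  · subst hij
    have : ‖M i i‖ = (M i i).re := by
      rw [Complex.norm_def, Complex.normSq_apply, (hdiag i).2]
      simp [Real.sqrt_mul_self (hdiag i).1]
    rw [this]; exact hle i
  · by_cases h0 : M i j = 0
    · rw [h0]
      simp only [norm_zero]
      exact le_trans (hdiag i).1 (hle i)
    · set α := M i j with hα
      set r := ‖α‖ with hr
      have hrpos : 0 < r := by
        rw [hr]
        exact norm_pos_iff.2 h0
      set c : ℂ := -(α / (r : ℂ)) with hc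
      have hcc : (starRingEnd ℂ) c * α = -(r : ℂ) := by
        rw [hc]
        have hr0 : (r : ℂ) ≠ 0 := by exact_mod_cast hrpos.ne'
        rw [map_neg, map_div₀, Complex.conj_ofReal, neg_mul, div_mul_eq_mul_div,
          mul_comm ((starRingEnd ℂ) α) α, Complex.mul_conj, Complex.normSq_eq_norm_sq, ← hr]
        push_cast
        rw [pow_two, mul_div_assoc, div_self hr0, mul_one]
      have hcc2 : (starRingEnd ℂ) α * c = -(r : ℂ) := by
        have := congrArg (starRingEnd ℂ) hcc
        simpa [mul_comm] using this
      have hji : M j i = (starRingEnd ℂ) α := by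
        have h' := congrArg star (hM.1.apply i j)
        rw [star_star] at h'
        rw [hα, ← Complex.star_def]
        exact h'
      have hcabs : ‖c‖ = 1 := by
        rw [hc]
        simp [norm_div, hr, abs_of_pos hrpos, div_self (ne_of_gt hrpos), h0]
      -- the quadratic form at x = single i c + single j 1
      set x : k → ℂ := Pi.single i c + Pi.single j 1 with hx
      have hq := hM.dotProduct_mulVec_nonneg x
      have hqval : star x ⬝ᵥ M *ᵥ x = M i i + M j j - 2 * (r : ℂ) := by
        rw [hx]
        rw [star_add, Matrix.mulVec_add, dotProduct_add, add_dotProduct,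
          add_dotProduct]
        have e1 : ∀ (a : k) (z : ℂ),
            star (Pi.single a z : k → ℂ) = (Pi.single a (star z) : k → ℂ) := by
          intro a z
          funext b
          by_cases hb : b = a
          · subst hb; simp
          · simp [Pi.single_apply, hb]
        have e2 : ∀ (a b : k) (z w : ℂ),
            (Pi.single a z : k → ℂ) ⬝ᵥ M *ᵥ Pi.single b w = z * M a b * w := by
          intro a b z w
          rw [single_dotProduct]
          simp only [Matrix.mulVec, dotProduct, Pi.single_apply, mul_ite, mul_zero,
            Finset.sum_ite_eq, Finset.sum_ite_eq', Finset.mem_univ, if_true]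
          ring
        rw [e1, e1, e2, e2, e2, e2]
        simp only [star_one]
        rw [hji]
        have hcu : c * star c = 1 := by
          rw [Complex.star_def, Complex.mul_conj, Complex.normSq_eq_norm_sq, hcabs]
          norm_num
        have hcl : star c * M i i * c = M i i := by
          rw [mul_comm (star c) (M i i), mul_assoc, mul_comm (star c) c, hcu, mul_one]
        rw [hcl]
        have : star c * α * 1 = -(r:ℂ) := by rw [mul_one]; exact hcc
        rw [this]
        have : (1:ℂ) * ((starRingEnd ℂ) α) * c = -(r:ℂ) := by
          rw [one_mul]; exact hcc2
        rw [this]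
        ring
      rw [hqval] at hq
      have hre := (Complex.le_def.1 hq).1
      simp only [Complex.sub_re, Complex.add_re, Complex.mul_re, Complex.ofReal_re,
        Complex.ofReal_im, Complex.zero_re] at hre
      have : 2 * r ≤ (M i i).re + (M j j).re := by
        norm_num at hre
        linarith
      have := le_trans this (add_le_add (hle i) (hle j))
      rw [hr, hα] at *
      linarith

/-- For a CPTP map, the entries of the image of a standard basis matrix are bounded
by the dimension. -/
lemma cptp_std_bound {n : Type} [Fintype n] [DecidableEq n]
    {Ψ : Matrix n n ℂ →ₗ[ℂ] Matrix n n ℂ} (h : IsCPTP Ψ) (a a' i j : n) :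
    ‖Ψ (Matrix.single a a' 1) i j‖ ≤ (Fintype.card n : ℝ) := by
  classical
  let w : n × n → ℂ := fun p => if p.1 = p.2 then 1 else 0
  let Aw : Matrix (n × n) Unit ℂ := Matrix.of fun x _ => w x
  have hMpsd : (Aw * Awᴴ).PosSemidef := Matrix.posSemidef_self_mul_conjTranspose Aw
  have hM : ∀ p q, (Aw * Awᴴ) p q = w p * star (w q) := by
    intro p q
    simp [Matrix.mul_apply, Aw, Matrix.conjTranspose_apply]
  have hC : (amp n Ψ (Aw * Awᴴ)).PosSemidef := h.2 n inferInstance _ hMpsd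
  have hEntry : amp n Ψ (Aw * Awᴴ) (a, i) (a', j) = Ψ (Matrix.single a a' 1) i j := by
    have hblk : (Matrix.of fun c c' => (Aw * Awᴴ) (a, c) (a', c'))
        = Matrix.single a a' (1:ℂ) := by
      ext c c'
      rw [Matrix.of_apply, hM]
      simp only [w, Matrix.single_apply, Matrix.of_apply]
      by_cases h1 : a = c <;> by_cases h2 : a' = c' <;> simp [h1, h2]
    show Ψ (Matrix.of fun c c' => (Aw * Awᴴ) ((a, i).1, c) ((a', j).1, c')) (a, i).2 (a', j).2
      = _
    rw [hblk]
  have htr : (amp n Ψ (Aw * Awᴴ)).trace = (Fintype.card n : ℂ) := by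
    have hblk : ∀ b : n, (Matrix.of fun c c' => (Aw * Awᴴ) (b, c) (b, c'))
        = Matrix.single b b (1:ℂ) := by
      intro b
      ext c c'
      rw [Matrix.of_apply, hM]
      simp only [w, Matrix.single_apply, Matrix.of_apply]
      by_cases h1 : b = c <;> by_cases h2 : b = c' <;> simp [h1, h2]
    have : (amp n Ψ (Aw * Awᴴ)).trace
        = ∑ b : n, (Ψ (Matrix.single b b (1:ℂ))).trace := by
      simp only [Matrix.trace, Matrix.diag, amp, Matrix.of_apply, LinearMap.coe_mk,
        AddHom.coe_mk, Fintype.sum_prod_type]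
      refine Finset.sum_congr rfl fun b _ => ?_
      rw [hblk b]
    rw [this]
    have : ∀ b : n, (Ψ (Matrix.single b b (1:ℂ))).trace = 1 := by
      intro b
      rw [h.1]
      simp [Matrix.trace, Matrix.diag, Matrix.single_apply, Finset.sum_ite_eq]
    simp [this]
  have := psd_entry_bound hC (a, i) (a', j)
  rw [hEntry, htr] at this
  simpa using this

/-- Entrywise bound for CPTP maps. -/
lemma cptp_apply_bound {n : Type} [Fintype n] [DecidableEq n]
    {Ψ : Matrix n n ℂ →ₗ[ℂ] Matrix n n ℂ} (h : IsCPTP Ψ) (X : Matrix n n ℂ) (i j : n) :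
    ‖Ψ X i j‖
      ≤ (Fintype.card n : ℝ) * ∑ a : n, ∑ a' : n, ‖X a a'‖ := by
  classical
  have hdec : Ψ X i j = ∑ a : n, ∑ a' : n, X a a' * Ψ (Matrix.single a a' 1) i j := by
    conv_lhs => rw [Matrix.matrix_eq_sum_single X]
    rw [map_sum]
    rw [Matrix.sum_apply]
    refine Finset.sum_congr rfl fun a _ => ?_
    rw [map_sum, Matrix.sum_apply]
    refine Finset.sum_congr rfl fun a' _ => ?_
    have : Matrix.single a a' (X a a') = X a a' • Matrix.single a a' (1:ℂ) := by
      rw [Matrix.smul_single, smul_eq_mul, mul_one]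
    rw [this, map_smul, Matrix.smul_apply, smul_eq_mul]
  rw [hdec]
  refine le_trans (norm_sum_le _ _) ?_
  rw [Finset.mul_sum]
  refine Finset.sum_le_sum fun a _ => ?_
  refine le_trans (norm_sum_le _ _) ?_
  rw [Finset.mul_sum]
  refine Finset.sum_le_sum fun a' _ => ?_
  rw [norm_mul, mul_comm ((Fintype.card n : ℝ)) _]
  exact mul_le_mul_of_nonneg_left (cptp_std_bound h a a' i j) (norm_nonneg _)

/-! ### The transfer operator preserves CPTP maps -/

lemma trace_ptraceB {A B : Type*} [Fintype A] [Fintype B] (X : Matrix (A × B) (A × B) ℂ) :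
    (ptraceB A B X).trace = X.trace := by
  simp [ptraceB, Matrix.trace, Matrix.diag, Fintype.sum_prod_type]

lemma trace_amp {A B : Type*} [Fintype A] [Fintype B]
    {Ψ : Matrix B B ℂ →ₗ[ℂ] Matrix B B ℂ} (hΨ : IsTracePreserving Ψ)
    (Z : Matrix (A × B) (A × B) ℂ) : (amp A Ψ Z).trace = Z.trace := by
  simp only [Matrix.trace, Matrix.diag, amp, Matrix.of_apply, LinearMap.coe_mk,
    AddHom.coe_mk, Fintype.sum_prod_type]
  refine Finset.sum_congr rfl fun a _ => ?_
  have := hΨ (Matrix.of fun c c' => Z (a, c) (a, c'))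
  simpa [Matrix.trace, Matrix.diag] using this

lemma trace_ancilla {A B : Type*} [Fintype A] [Fintype B] [DecidableEq B] (b0 : B)
    (ρ : Matrix A A ℂ) : (ancilla A B b0 ρ).trace = ρ.trace := by
  simp [ancilla, Matrix.trace, Matrix.diag, Fintype.sum_prod_type, Finset.sum_ite_eq']

lemma transferOp_isCPTP {n : Type} [Fintype n] [DecidableEq n] (b0 : n)
    (U : Matrix (n × n) (n × n) ℂ) (hU : U ∈ Matrix.unitaryGroup (n × n) ℂ)
    {Ψ : Matrix n n ℂ →ₗ[ℂ] Matrix n n ℂ} (hΨ : IsCPTP Ψ) :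
    IsCPTP (transferOp b0 U Ψ) := by
  have hU1 : U * Uᴴ = 1 := by
    have := Matrix.mem_unitaryGroup_iff.1 hU
    rwa [Matrix.star_eq_conjTranspose] at this
  have hU2 : Uᴴ * U = 1 := by
    have := Matrix.mem_unitaryGroup_iff'.1 hU
    rwa [Matrix.star_eq_conjTranspose] at this
  constructor
  · intro ρ
    show (ptraceB n n (Uᴴ * amp n Ψ (U * ancilla n n b0 ρ * Uᴴ) * U)).trace = ρ.trace
    rw [trace_ptraceB, Matrix.trace_mul_cycle, hU1, Matrix.one_mul,
      trace_amp hΨ.1, Matrix.trace_mul_cycle, hU2, Matrix.one_mul,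
      trace_ancilla]
  · intro m _ M hM
    have key : amp m (transferOp b0 U Ψ) M
        = gamp m (ptraceB n n) (gamp m (sandwich Uᴴ U)
            (gamp m (amp n Ψ) (gamp m (sandwich U Uᴴ) (gamp m (ancilla n n b0) M)))) := rfl
    rw [key]
    have h1 := psd_gamp_ancilla b0 m hM
    have h2 := psd_gamp_sandwich U m h1
    have h3 := psd_gamp_amp hΨ.2 m h2
    have h4 : (gamp m (sandwich Uᴴ U)
        (gamp m (amp n Ψ) (gamp m (sandwich U Uᴴ) (gamp m (ancilla n n b0) M)))).PosSemidef := by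
      have := psd_gamp_sandwich Uᴴ m h3
      rwa [Matrix.conjTranspose_conjTranspose] at this
    exact psd_gamp_ptraceB m h4

/-! ### Linearity of the transfer operator in `Φ` -/

lemma amp_add {A B : Type*} [Fintype A] [Fintype B]
    (Φ₁ Φ₂ : Matrix B B ℂ →ₗ[ℂ] Matrix B B ℂ) :
    amp A (Φ₁ + Φ₂) = amp A Φ₁ + amp A Φ₂ := by
  refine LinearMap.ext fun M => ?_
  ext p p'
  simp [amp]

lemma amp_smul {A B : Type*} [Fintype A] [Fintype B] (c : ℂ)
    (Φ : Matrix B B ℂ →ₗ[ℂ] Matrix B B ℂ) :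
    amp A (c • Φ) = c • amp A Φ := by
  refine LinearMap.ext fun M => ?_
  ext p p'
  simp [amp]

/-- The transfer operator, bundled as a linear endomorphism of the space of superoperators. -/
noncomputable def TLmap {n : Type} [Fintype n] [DecidableEq n] (b0 : n)
    (U : Matrix (n × n) (n × n) ℂ) :
    Module.End ℂ (Matrix n n ℂ →ₗ[ℂ] Matrix n n ℂ) where
  toFun Φ := transferOp b0 U Φ
  map_add' Φ₁ Φ₂ := by
    refine LinearMap.ext fun ρ => ?_
    show ptraceB n n (Uᴴ * amp n (Φ₁ + Φ₂) (U * ancilla n n b0 ρ * Uᴴ) * U) = _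
    rw [amp_add]
    simp only [LinearMap.add_apply]
    rw [Matrix.mul_add, Matrix.add_mul, map_add]
    rfl
  map_smul' c Φ := by
    refine LinearMap.ext fun ρ => ?_
    show ptraceB n n (Uᴴ * amp n (c • Φ) (U * ancilla n n b0 ρ * Uᴴ) * U) = _
    rw [amp_smul]
    simp only [LinearMap.smul_apply]
    rw [Matrix.mul_smul, Matrix.smul_mul, map_smul]
    rfl

/-- **Theorem 1 (concrete form).** Let `U` be a unitary on `ℂ^(n × n)` (with `A = B = n`).
If a nonzero element `Φ` of the linear span of the CPTP maps on `Matrix n n ℂ` satisfies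
`T_U[Φ] = λ • Φ`, then `|λ| ≤ 1`. -/
theorem transferOp_eigenvalue_modulus_le_one
    {n : Type} [Fintype n] [DecidableEq n] [Nonempty n] (b0 : n)
    (U : Matrix.unitaryGroup (n × n) ℂ)
    (Φ : Matrix n n ℂ →ₗ[ℂ] Matrix n n ℂ)
    (hmem : Φ ∈ Submodule.span ℂ
      {Ψ : Matrix n n ℂ →ₗ[ℂ] Matrix n n ℂ | IsCPTP Ψ})
    (hne : Φ ≠ 0) (lam : ℂ)
    (heig : transferOp b0 (U : Matrix (n × n) (n × n) ℂ) Φ = lam • Φ) :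
    ‖lam‖ ≤ 1 := by
  classical
  -- a nonzero entry of Φ at some input
  have hX : ∃ (X : Matrix n n ℂ) (t s : n), Φ X t s ≠ 0 := by
    by_contra hcon
    push_neg at hcon
    apply hne
    refine LinearMap.ext fun X => ?_
    ext t s
    simpa using hcon X t s
  obtain ⟨X, t, s, hXts⟩ := hX
  -- decompose Φ as a finite combination of CPTP maps
  obtain ⟨N, c, g, hsum⟩ := Submodule.mem_span_set'.1 hmem
  set T := TLmap b0 (U : Matrix (n × n) (n × n) ℂ) with hT
  have hTapp : ∀ Ψ, T Ψ = transferOp b0 (U : Matrix (n × n) (n × n) ℂ) Ψ := fun _ => rfl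
  -- iterated eigenvalue equation
  have hiter : ∀ k : ℕ, (T ^ k) Φ = lam ^ k • Φ := by
    intro k
    induction k with
    | zero => simp
    | succ k ih =>
      rw [pow_succ, Module.End.mul_apply, hTapp, heig, map_smul, ih, smul_smul, ← pow_succ']
  -- iterates of CPTP maps remain CPTP
  have hCPTPk : ∀ (k : ℕ) (Ψ : Matrix n n ℂ →ₗ[ℂ] Matrix n n ℂ),
      IsCPTP Ψ → IsCPTP ((T ^ k) Ψ) := by
    intro k
    induction k with
    | zero => intro Ψ hΨ; simpa using hΨ
    | succ k ih =>
      intro Ψ hΨ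
      rw [pow_succ', Module.End.mul_apply, hTapp]
      exact transferOp_isCPTP b0 _ U.2 (ih Ψ hΨ)
  -- uniform bound
  set S : ℝ := ∑ a : n, ∑ a' : n, ‖X a a'‖ with hS
  set D : ℝ := ∑ i : Fin N, ‖c i‖ * ((Fintype.card n : ℝ) * S) with hD
  have hbound : ∀ k : ℕ, ‖lam‖ ^ k * ‖Φ X t s‖ ≤ D := by
    intro k
    have h1 : (T ^ k) Φ = ∑ i : Fin N, c i • (T ^ k) (g i : Matrix n n ℂ →ₗ[ℂ] Matrix n n ℂ) := by
      rw [← hsum, map_sum]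
      refine Finset.sum_congr rfl fun i _ => ?_
      rw [map_smul]
    have h2 : ((T ^ k) Φ) X t s
        = ∑ i : Fin N, c i * ((T ^ k) (g i : Matrix n n ℂ →ₗ[ℂ] Matrix n n ℂ)) X t s := by
      rw [h1, LinearMap.sum_apply, Matrix.sum_apply]
      refine Finset.sum_congr rfl fun i _ => ?_
      rw [LinearMap.smul_apply, Matrix.smul_apply, smul_eq_mul]
    have h3 : ((T ^ k) Φ) X t s = lam ^ k * Φ X t s := by
      rw [hiter k, LinearMap.smul_apply, Matrix.smul_apply, smul_eq_mul]
    have h4 : ‖((T ^ k) Φ) X t s‖ ≤ D := by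
      rw [h2]
      refine le_trans (norm_sum_le _ _) ?_
      rw [hD]
      refine Finset.sum_le_sum fun i _ => ?_
      rw [norm_mul]
      refine mul_le_mul_of_nonneg_left ?_ (norm_nonneg _)
      exact cptp_apply_bound (hCPTPk k _ (g i).2) X t s
    rw [h3, norm_mul, norm_pow] at h4
    exact h4
  by_contra hgt
  push_neg at hgt
  obtain ⟨k, hk⟩ := pow_unbounded_of_one_lt (D / ‖Φ X t s‖) hgt
  have hpos : 0 < ‖Φ X t s‖ := by
    simpa [norm_pos_iff] using hXts
  have h5 : D < ‖lam‖ ^ k * ‖Φ X t s‖ := by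
    rw [div_lt_iff₀ hpos] at hk
    linarith
  exact absurd (hbound k) (not_le.2 h5)
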